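/- Let w be a binary word starting with 0 that avoids factors 000 and 111 and contains an instance of the pattern xx^Rx. Then its associated sequence f(w) = (n_0,...,n_k) has an index j with 1 ≤ j ≤ k-1 such that n_{j-1} ≥ n_j and n_j ≤ n_{j+1}; equivalently f(w) does not belong to X. -/

import Mathlib

/-- A binary word avoids the pattern `x xᴿ x`: no factor `u ++ u.reverse ++ u` with `u` nonempty. -/
def AvoidsP (w : List Bool) : Prop :=
  ¬ ∃ u : List Bool, u ≠ [] ∧ (u ++ u.reverse ++ u) <:+: w

/-- A binary word avoids the factors `000` and `111`. -/
def AvoidsCubes (w : List Bool) : Prop :=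
  ¬ ([false, false, false] <:+: w) ∧ ¬ ([true, true, true] <:+: w)

/-- Alternating word: a prefix of `0101…` or `1010…`. -/
def Alt (A : List Bool) : Prop := A.Chain' (· ≠ ·)

/-- Glue the blocks `A_0 a_1 a_1 A_1 a_2 a_2 ⋯ a_k a_k A_k`. -/
def glue : List (List Bool) → List Bool → List Bool
  | [], _ => []
  | [A], _ => A
  | A :: As, [] => A ++ glue As []
  | A :: As, b :: bs => A ++ [b, b] ++ glue As bs

/-- `IsFact As bs w` : `w = A_0 b_1 b_1 A_1 ⋯ b_k b_k A_k` with all `A_i` alternating. -/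
def IsFact (As : List (List Bool)) (bs : List Bool) (w : List Bool) : Prop :=
  As.length = bs.length + 1 ∧ (∀ A ∈ As, Alt A) ∧ w = glue As bs

/-- Middle and final entries of the associated sequence: `n_i = |a_i A_i a_{i+1}|`, `n_k = |a_k A_k|`. -/
def seqMid : List (List Bool) → List ℕ
  | [] => []
  | [A] => [A.length + 1]
  | A :: As => (A.length + 2) :: seqMid As

/-- The sequence `f(w) = (n_0, …, n_k)` associated to the canonical factorization. -/
def seqOf : List (List Bool) → List ℕ
  | [] => []
  | [A] => if A.isEmpty then [] else [A.length]
  | A :: As => (A.length + 1) :: seqMid As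

/-- No index `j` with `d_{j-1} ≥ d_j` and `d_j ≤ d_{j+1}`. -/
def NoValley (d : List ℕ) : Prop :=
  ∀ j : ℕ, 1 ≤ j → j + 1 < d.length →
    ¬ (d.getD (j - 1) 0 ≥ d.getD j 0 ∧ d.getD j 0 ≤ d.getD (j + 1) 0)

/-- Membership in the set `X` of sequences. -/
def InX (d : List ℕ) : Prop := (∀ x ∈ d, 0 < x) ∧ NoValley d

/-- Type 1 (strongly unimodal): strictly increasing to a unique maximum, then strictly decreasing. -/
def Type1 (d : List ℕ) : Prop :=
  (∀ x ∈ d, 0 < x) ∧ d ≠ [] ∧ ∃ j < d.length,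
    (∀ i : ℕ, i + 1 ≤ j → d.getD i 0 < d.getD (i + 1) 0) ∧
    (∀ i : ℕ, j ≤ i → i + 1 < d.length → d.getD i 0 > d.getD (i + 1) 0)

/-- Type 2: strictly increasing, two equal consecutive maximal terms, then strictly decreasing. -/
def Type2 (d : List ℕ) : Prop :=
  (∀ x ∈ d, 0 < x) ∧ ∃ j, 1 ≤ j ∧ j < d.length ∧
    d.getD (j - 1) 0 = d.getD j 0 ∧
    (∀ i : ℕ, i + 1 ≤ j - 1 → d.getD i 0 < d.getD (i + 1) 0) ∧
    (∀ i : ℕ, j ≤ i → i + 1 < d.length → d.getD i 0 > d.getD (i + 1) 0)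

/-- `v n` : number of sequences in `X` of weight `n`. -/
noncomputable def v (n : ℕ) : ℕ := Nat.card {d : List ℕ // InX d ∧ d.sum = n}

/-- A strict partition, viewed as a finite set of positive integers. -/
def StrictPartition (s : Finset ℕ) : Prop := 0 ∉ s

/-- `utilde n` : number of pairs of partitions into distinct parts of total weight `n`. -/
noncomputable def utilde (n : ℕ) : ℕ :=
  Nat.card {p : Finset ℕ × Finset ℕ //
    StrictPartition p.1 ∧ StrictPartition p.2 ∧ p.1.sum id + p.2.sum id = n}

/-- `c n` : number of binary words of length `n` avoiding `x xᴿ x`. -/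
noncomputable def c (n : ℕ) : ℕ := Nat.card {w : List Bool // w.length = n ∧ AvoidsP w}

/-- The word `(01)^n`. -/
def w01 (n : ℕ) : List Bool := (List.replicate n [false, true]).flatten

/-- The word `(10)^n`. -/
def w10 (n : ℕ) : List Bool := (List.replicate n [true, false]).flatten

/-- gap sequence of a set of marked positions -/
def gaps : ℕ → List ℕ → ℕ → List ℕ
  | prev, [], L => [L - prev]
  | prev, p :: ps, L => (p + 1 - prev) :: gaps (p + 1) ps L

lemma gaps_length (D : List ℕ) : ∀ (prev L : ℕ), (gaps prev D L).length = D.length + 1 := by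
  induction D with
  | nil => intro prev L; simp [gaps]
  | cons p ps ih => intro prev L; simp [gaps, ih]

lemma desc (d : List ℕ) (hnv : NoValley d) (a : ℕ) (ha : 1 ≤ a)
    (hd : d.getD (a - 1) 0 ≥ d.getD a 0) :
    ∀ b, a ≤ b → b + 1 < d.length → d.getD b 0 > d.getD (b + 1) 0 := by
  intro b
  induction b with
  | zero => intro h1 h2; omega
  | succ n ih =>
    intro h1 h2
    have e : n + 1 - 1 = n := rfl
    rcases Nat.lt_or_ge a (n+1) with h | h
    · have hn : d.getD n 0 > d.getD (n+1) 0 := ih (by omega) (by omega)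
      have := hnv (n+1) (by omega) h2
      rw [e] at this
      omega
    · have hae : a = n + 1 := by omega
      subst hae
      have := hnv (n+1) (by omega) h2
      rw [e] at this
      rw [e] at hd
      omega

lemma chain'_lt_head {p : ℕ} {rest : List ℕ} (h : List.Chain' (· < ·) (p :: rest)) :
    ∀ x ∈ rest, p < x := by
  rw [List.Chain', List.isChain_iff_pairwise] at h
  exact (List.pairwise_cons.1 h).1

lemma lemB : ∀ (D : List ℕ) (prev L q2 p0 : ℕ),
    List.Chain' (· < ·) D → q2 ∈ D → p0 ∈ D → p0 < q2 →
    (∀ p ∈ D, p < q2 → p ≤ p0) →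
    (∀ p ∈ D, q2 < p → q2 + (q2 - p0) ≤ p) →
    q2 + (q2 - p0) + 1 ≤ L →
    ∃ b, 1 ≤ b ∧ b + 1 < (gaps prev D L).length ∧
      (gaps prev D L).getD b 0 ≤ (gaps prev D L).getD (b + 1) 0 := by
  intro D
  induction D with
  | nil => intro _ _ _ _ _ hq2; simp at hq2
  | cons p rest ih =>
    intro prev L q2 p0 hch hq2 hp0 hlt hb1 hb2 hb3
    have hrest : ∀ x ∈ rest, p < x := chain'_lt_head hch
    by_cases hpp : p = p0
    · subst hpp
      -- rest must start with q2
      have hq2r : q2 ∈ rest := by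
        rcases List.mem_cons.1 hq2 with hx | hx
        · omega
        · exact hx
      cases rest with
      | nil => simp at hq2r
      | cons h0 rest' =>
        have hhq2 : h0 = q2 := by
          rcases List.mem_cons.1 hq2r with hx | hx
          · omega
          · have h1 : p < h0 := hrest h0 (by simp)
            have h2 : h0 < q2 := chain'_lt_head hch.tail q2 hx
            have := hb1 h0 (by simp) h2
            omega
        refine ⟨1, le_refl _, ?_, ?_⟩
        · simp [gaps, gaps_length]
        · show (gaps prev (p :: h0 :: rest') L).getD 1 0 ≤ (gaps prev (p :: h0 :: rest') L).getD 2 0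
          simp only [gaps]
          cases rest' with
          | nil => simp [gaps]; omega
          | cons p' r'' =>
            have hp' : h0 < p' := chain'_lt_head hch.tail p' (by simp)
            have := hb2 p' (by simp) (by omega)
            simp [gaps]; omega
    · have hplt : p < p0 := by
        rcases List.mem_cons.1 hp0 with hx | hx
        · omega
        · exact hrest p0 hx
      have hq2r : q2 ∈ rest := by
        rcases List.mem_cons.1 hq2 with hx | hx
        · omega
        · exact hx
      have hp0r : p0 ∈ rest := by
        rcases List.mem_cons.1 hp0 with hx | hx
        · omega
        · exact hx
      obtain ⟨b, hb, hlen, hle⟩ := ih (p+1) L q2 p0 hch.tail hq2r hp0r hlt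
        (fun x hx => hb1 x (by simp [hx]))
        (fun x hx => hb2 x (by simp [hx])) hb3
      refine ⟨b + 1, by omega, ?_, ?_⟩
      · simp only [gaps, List.length_cons]
        simpa using Nat.succ_lt_succ hlen
      · simp only [gaps]
        rw [List.getD_cons_succ, List.getD_cons_succ]
        exact hle

lemma lemAB : ∀ (D : List ℕ) (prev L q1 n0 p0 q2 : ℕ),
    List.Chain' (· < ·) D → q1 ∈ D → n0 ∈ D → p0 ∈ D → q2 ∈ D →
    q1 < n0 → p0 < q2 → q1 ≤ p0 → n0 ≤ q2 →
    (∀ p ∈ D, q1 < p → n0 ≤ p) →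
    (∀ p ∈ D, p < q1 → p + (n0 - q1) ≤ q1) →
    prev + (n0 - q1) ≤ q1 + 1 →
    (∀ p ∈ D, p < q2 → p ≤ p0) →
    (∀ p ∈ D, q2 < p → q2 + (q2 - p0) ≤ p) →
    q2 + (q2 - p0) + 1 ≤ L →
    ∃ a b, 1 ≤ a ∧ a ≤ b ∧ b + 1 < (gaps prev D L).length ∧
      (gaps prev D L).getD (a - 1) 0 ≥ (gaps prev D L).getD a 0 ∧
      (gaps prev D L).getD b 0 ≤ (gaps prev D L).getD (b + 1) 0 := by
  intro D
  induction D with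
  | nil => intro _ _ _ _ _ _ _ hq1; simp at hq1
  | cons p rest ih =>
    intro prev L q1 n0 p0 q2 hch hq1 hn0 hp0 hq2 h1 h2 h3 h4 ha1 ha2 ha3 hb1 hb2 hb3
    have hrest : ∀ x ∈ rest, p < x := chain'_lt_head hch
    by_cases hpp : p = q1
    · subst hpp
      -- rest starts with n0
      have hn0r : n0 ∈ rest := by
        rcases List.mem_cons.1 hn0 with hx | hx
        · omega
        · exact hx
      cases rest with
      | nil => simp at hn0r
      | cons h0 rest2 =>
        have hhn0 : h0 = n0 := by
          rcases List.mem_cons.1 hn0r with hx | hx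
          · omega
          · have hlt : h0 < n0 := chain'_lt_head hch.tail n0 hx
            have := ha1 h0 (by simp) (hrest h0 (by simp))
            omega
        subst hhn0
        -- a = 1 works
        have hA : (gaps prev (p :: h0 :: rest2) L).getD 0 0 ≥
            (gaps prev (p :: h0 :: rest2) L).getD 1 0 := by
          simp only [gaps]
          simp [List.getD_cons_zero, List.getD_cons_succ]
          omega
        by_cases hnq : h0 = q2
        · subst hnq
          -- p0 = p (=q1)
          have hp0p : p0 = p := by
            rcases List.mem_cons.1 hp0 with hx | hx
            · exact hx
            · rcases List.mem_cons.1 hx with hy | hy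
              · omega
              · have := chain'_lt_head hch.tail p0 hy
                omega
          subst hp0p
          refine ⟨1, 1, le_refl _, le_refl _, ?_, hA, ?_⟩
          · simp [gaps, gaps_length]
          · show (gaps prev (p0 :: h0 :: rest2) L).getD 1 0 ≤
                (gaps prev (p0 :: h0 :: rest2) L).getD 2 0
            simp only [gaps]
            cases rest2 with
            | nil => simp [gaps]; omega
            | cons p' r'' =>
              have hp' : h0 < p' := chain'_lt_head hch.tail p' (by simp)
              have := hb2 p' (by simp) (by omega)
              simp [gaps]; omega
        · -- q2 ∈ h0 :: rest2, q2 ≠ p; use lemB on (h0 :: rest2)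
          have hq2r : q2 ∈ h0 :: rest2 := by
            rcases List.mem_cons.1 hq2 with hx | hx
            · omega
            · exact hx
          have hp0r : p0 ∈ h0 :: rest2 := by
            rcases List.mem_cons.1 hp0 with hx | hx
            · -- p0 = p = q1, but n0 ≤ p0 since n0 < q2 and n0 ∈ D
              have := hb1 h0 (by simp) (by omega)
              omega
            · exact hx
          obtain ⟨b, hb, hlen, hle⟩ := lemB (h0 :: rest2) (p+1) L q2 p0 hch.tail hq2r hp0r h2
            (fun x hx => hb1 x (by simp [List.mem_cons.2 (Or.inr hx)]))
            (fun x hx => hb2 x (by simp [List.mem_cons.2 (Or.inr hx)])) hb3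
          refine ⟨1, b + 1, le_refl _, by omega, ?_, hA, ?_⟩
          · show b + 1 + 1 < (gaps prev (p :: h0 :: rest2) L).length
            rw [gaps_length] at hlen ⊢
            simp at hlen ⊢
            omega
          · show (gaps prev (p :: h0 :: rest2) L).getD (b+1) 0 ≤
                (gaps prev (p :: h0 :: rest2) L).getD (b+1+1) 0
            simp only [gaps]
            rw [List.getD_cons_succ, List.getD_cons_succ]
            exact hle
    · have hplt : p < q1 := by
        rcases List.mem_cons.1 hq1 with hx | hx
        · omega
        · exact hrest q1 hx
      have hq1r : q1 ∈ rest := by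
        rcases List.mem_cons.1 hq1 with hx | hx
        · omega
        · exact hx
      have hn0r : n0 ∈ rest := by
        rcases List.mem_cons.1 hn0 with hx | hx
        · omega
        · exact hx
      have hp0r : p0 ∈ rest := by
        rcases List.mem_cons.1 hp0 with hx | hx
        · omega
        · exact hx
      have hq2r : q2 ∈ rest := by
        rcases List.mem_cons.1 hq2 with hx | hx
        · omega
        · exact hx
      have hprev' : (p + 1) + (n0 - q1) ≤ q1 + 1 := by
        have := ha2 p (by simp) hplt
        omega
      obtain ⟨a, b, ha, hab, hlen, hga, hgb⟩ := ih (p+1) L q1 n0 p0 q2 hch.tail hq1r hn0r hp0r hq2r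
        h1 h2 h3 h4
        (fun x hx => ha1 x (by simp [hx]))
        (fun x hx => ha2 x (by simp [hx])) hprev'
        (fun x hx => hb1 x (by simp [hx]))
        (fun x hx => hb2 x (by simp [hx])) hb3
      refine ⟨a + 1, b + 1, by omega, by omega, ?_, ?_, ?_⟩
      · simp only [gaps, List.length_cons]
        rw [gaps_length] at hlen ⊢
        simp at hlen ⊢
        omega
      · show (gaps prev (p :: rest) L).getD (a + 1 - 1) 0 ≥ (gaps prev (p :: rest) L).getD (a+1) 0
        rw [show a + 1 - 1 = (a - 1) + 1 from by omega]
        simp only [gaps]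
        rw [List.getD_cons_succ, List.getD_cons_succ]
        exact hga
      · show (gaps prev (p :: rest) L).getD (b+1) 0 ≤ (gaps prev (p :: rest) L).getD (b+1+1) 0
        simp only [gaps]
        rw [List.getD_cons_succ, List.getD_cons_succ]
        exact hgb

def dpos : List (List Bool) → List ℕ
  | [] => []
  | [_] => []
  | A :: As => A.length :: (dpos As).map (· + (A.length + 2))

def glen : List (List Bool) → ℕ
  | [] => 0
  | [A] => A.length
  | A :: As => A.length + 2 + glen As

lemma glue_length : ∀ (As : List (List Bool)) (bs : List Bool),
    As.length = bs.length + 1 → (glue As bs).length = glen As := by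
  intro As
  induction As with
  | nil => intro bs h; simp at h
  | cons A As ih =>
    intro bs h
    cases As with
    | nil => simp [glue, glen]  -- glue [A] bs = A
    | cons A' T =>
      cases bs with
      | nil => simp at h
      | cons b bs' =>
        have := ih bs' (by simpa using h)
        simp [glue, glen, this]
        omega

lemma seqMid_eq : ∀ (As : List (List Bool)) (c : ℕ), As ≠ [] →
    seqMid As = gaps (c + 1) ((dpos As).map (· + (c + 2))) (c + 2 + glen As) := by
  intro As
  induction As with
  | nil => intro c h; simp at h
  | cons A As ih =>
    intro c _
    cases As with
    | nil => simp [seqMid, dpos, gaps, glen]; omega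
    | cons A' T =>
      have hih := ih (A.length + c + 2) (by simp)
      simp only [seqMid, dpos, glen, List.map_cons, List.map_map, gaps]
      refine List.cons_eq_cons.mpr ⟨by omega, ?_⟩
      rw [hih]
      congr 1
      · congr 1
        funext x
        simp [Function.comp]
        omega
      · omega

lemma seqOf_eq_gaps (As : List (List Bool)) (bs : List Bool)
    (hlen : As.length = bs.length + 1) (hne : glue As bs ≠ []) :
    seqOf As = gaps 0 (dpos As) (glue As bs).length := by
  cases As with
  | nil => simp at hlen
  | cons A As' =>
    cases As' with
    | nil =>
      have hA : glue [A] bs = A := by cases bs <;> rfl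
      rw [hA] at hne
      simp [seqOf, dpos, gaps, hA, List.isEmpty_iff, hne]
    | cons A' T =>
      cases bs with
      | nil => simp at hlen
      | cons b bs' =>
        have hg : (glue (A :: A' :: T) (b :: bs')).length = glen (A :: A' :: T) :=
          glue_length _ _ hlen
        rw [hg]
        show seqOf (A :: A' :: T) = gaps 0 (dpos (A :: A' :: T)) (glen (A :: A' :: T))
        have hm := seqMid_eq (A' :: T) A.length (by simp)
        simp only [seqOf, dpos, glen, gaps]
        refine List.cons_eq_cons.mpr ⟨by omega, ?_⟩
        rw [hm]

lemma dpos_chain : ∀ As : List (List Bool), List.Chain' (· < ·) (dpos As) := by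
  intro As
  induction As with
  | nil => simp [dpos, List.Chain']
  | cons A As ih =>
    cases As with
    | nil => simp [dpos, List.Chain']
    | cons A' T =>
      show List.Chain' (· < ·) (A.length :: (dpos (A'::T)).map (· + (A.length + 2)))
      rw [List.Chain', List.isChain_cons]
      constructor
      · intro y hy
        simp only [List.head?_map, Option.mem_def, Option.map_eq_some_iff] at hy
        obtain ⟨x, -, rfl⟩ := hy
        omega
      · rw [List.isChain_map]
        exact ih.imp (fun a b h => by omega)

lemma avoidsCubes_infix {w t : List Bool} (hc : AvoidsCubes w) (h : t <:+: w) :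
    AvoidsCubes t :=
  ⟨fun h' => hc.1 (h'.trans h), fun h' => hc.2 (h'.trans h)⟩

lemma no3 {w : List Bool} (hc : AvoidsCubes w) (p : ℕ) (h2 : p + 2 < w.length) :
    ¬ (w.getD p false = w.getD (p+1) false ∧ w.getD (p+1) false = w.getD (p+2) false) := by
  rintro ⟨e1, e2⟩
  set c := w.getD p false with hcdef
  have g0 : w.getD p false = w[p]'(by omega) := List.getD_eq_getElem w false (by omega)
  have g1 : w.getD (p+1) false = w[p+1]'(by omega) := List.getD_eq_getElem w false (by omega)
  have g2 : w.getD (p+2) false = w[p+2]'(by omega) := List.getD_eq_getElem w false (by omega)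
  have hdrop : w.drop p = c :: c :: c :: w.drop (p+3) := by
    rw [List.drop_eq_getElem_cons (show p < w.length by omega)]
    rw [List.drop_eq_getElem_cons (show p+1 < w.length by omega)]
    rw [List.drop_eq_getElem_cons (show p+2 < w.length by omega)]
    rw [← g0, ← g1, ← g2, ← e2, ← e1, ← hcdef]
  have hpre : [c, c, c] <+: w.drop p := ⟨w.drop (p+3), by rw [hdrop]; rfl⟩
  have hinf : [c, c, c] <:+: w := hpre.isInfix.trans (List.drop_suffix p w).isInfix
  clear_value c
  cases c
  · exact hc.1 hinf
  · exact hc.2 hinf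

lemma alt_ne {A : List Bool} (hA : Alt A) (p : ℕ) (h : p + 1 < A.length) :
    A.getD p false ≠ A.getD (p+1) false := by
  rw [List.getD_eq_getElem A false (by omega), List.getD_eq_getElem A false h]
  have := List.isChain_iff_getElem.1 hA p (by omega)
  simpa using this

lemma dpos_lt : ∀ As : List (List Bool), ∀ p ∈ dpos As, p + 1 < glen As := by
  intro As
  induction As with
  | nil => simp [dpos]
  | cons A As ih =>
    cases As with
    | nil => simp [dpos]
    | cons A' T =>
      intro p hp
      rcases List.mem_cons.1 hp with h | h
      · subst h; show A.length + 1 < A.length + 2 + glen (A' :: T); omega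
      · simp only [List.mem_map] at h
        obtain ⟨x, hx, rfl⟩ := h
        have := ih x hx
        show x + (A.length + 2) + 1 < A.length + 2 + glen (A' :: T)
        omega

lemma dbl_iff : ∀ (As : List (List Bool)) (bs : List Bool),
    As.length = bs.length + 1 → (∀ A ∈ As, Alt A) → AvoidsCubes (glue As bs) →
    ∀ p : ℕ, p ∈ dpos As ↔
      (p + 1 < (glue As bs).length ∧
        (glue As bs).getD p false = (glue As bs).getD (p+1) false) := by
  intro As
  induction As with
  | nil => intro bs h; simp at h
  | cons A As ih =>
    intro bs hlen halt hc p
    cases As with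
    | nil =>
      have hA : glue [A] bs = A := by cases bs <;> rfl
      rw [hA]
      simp only [dpos, List.not_mem_nil, false_iff]
      rintro ⟨h1, h2⟩
      exact alt_ne (halt A (by simp)) p h1 h2
    | cons A' T =>
      cases bs with
      | nil => simp at hlen
      | cons b bs' =>
        set rest := glue (A' :: T) bs' with hrest
        have hw : glue (A :: A' :: T) (b :: bs') = A ++ ([b, b] ++ rest) := by
          show A ++ [b, b] ++ rest = _
          rw [List.append_assoc]
        rw [hw] at hc ⊢
        set w := A ++ ([b, b] ++ rest) with hwdef
        have hwlen : w.length = A.length + 2 + rest.length := by simp [hwdef]; omega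
        -- getD facts
        have gA : ∀ i, i < A.length → w.getD i false = A.getD i false := by
          intro i hi
          exact List.getD_append A _ false i hi
        have gb0 : w.getD A.length false = b := by
          rw [List.getD_append_right A _ false A.length (le_refl _)]
          simp
        have gb1 : w.getD (A.length + 1) false = b := by
          rw [List.getD_append_right A _ false _ (by omega)]
          simp
        have gr : ∀ i, w.getD (A.length + 2 + i) false = rest.getD i false := by
          intro i
          rw [List.getD_append_right A _ false _ (by omega)]
          rw [show A.length + 2 + i - A.length = 2 + i from by omega]
          show ([b, b] ++ rest).getD (2 + i) false = rest.getD i false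
          rw [List.getD_append_right [b, b] rest false _ (by simp)]
          simp [Nat.add_comm]
        have hrestlen : (A' :: T).length = bs'.length + 1 := by simpa using hlen
        have hcr : AvoidsCubes rest := by
          apply avoidsCubes_infix hc
          exact ⟨A ++ [b, b], [], by simp [hwdef]⟩
        have ihr := ih bs' hrestlen (fun X hX => halt X (by simp [hX])) hcr
        rw [← hrest] at ihr
        have hdp : dpos (A :: A' :: T) = A.length :: (dpos (A' :: T)).map (· + (A.length + 2)) := rfl
        rw [hdp]
        constructor
        · -- membership → double
          intro hp
          rcases List.mem_cons.1 hp with h | h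
          · subst h
            exact ⟨by omega, by simp only [gb0, gb1]⟩
          · simp only [List.mem_map] at h
            obtain ⟨x, hx, rfl⟩ := h
            obtain ⟨hx1, hx2⟩ := (ihr x).1 hx
            constructor
            · omega
            · rw [show x + (A.length + 2) + 1 = A.length + 2 + (x + 1) from by omega,
                show x + (A.length + 2) = A.length + 2 + x from by omega, gr, gr]
              exact hx2
        · -- double → membership
          rintro ⟨h1, h2⟩
          rcases Nat.lt_or_ge p A.length with hcase | hcase
          · -- p inside A
            exfalso
            rcases Nat.lt_or_ge (p + 1) A.length with hc2 | hc2
            · rw [gA p hcase, gA (p+1) hc2] at h2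
              exact alt_ne (halt A (by simp)) p hc2 h2
            · -- p + 1 = A.length : boundary, cube with the two b's
              have hpe : p + 1 = A.length := by omega
              have e1 : w.getD p false = w.getD (p+1) false := h2
              have e2 : w.getD (p+1) false = w.getD (p+2) false := by
                rw [show p + 1 = A.length from hpe, show p + 2 = A.length + 1 from by omega]
                simp only [gb0, gb1]
              exact no3 hc p (by omega) ⟨e1, e2⟩
          · rcases Nat.lt_or_ge p (A.length + 2) with hcase2 | hcase2
            · rcases Nat.lt_or_ge p (A.length + 1) with hcase3 | hcase3
              · -- p = A.length : the separator
                have : p = A.length := by omega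
                subst this
                exact List.mem_cons.2 (Or.inl rfl)
              · -- p = A.length + 1 : would give cube b b (head rest)
                exfalso
                have hpe : p = A.length + 1 := by omega
                subst hpe
                have e1 : w.getD A.length false = w.getD (A.length + 1) false := by
                  rw [gb0, gb1]
                exact no3 hc A.length (by omega) ⟨e1, h2⟩
            · -- p in rest
              obtain ⟨q, rfl⟩ : ∃ q, p = A.length + 2 + q := ⟨p - (A.length + 2), by omega⟩
              have h2' : rest.getD q false = rest.getD (q+1) false := by
                rw [← gr, ← gr, show A.length + 2 + (q + 1) = A.length + 2 + q + 1 from rfl]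
                exact h2
              have := (ihr q).2 ⟨by omega, h2'⟩
              exact List.mem_cons.2 (Or.inr (List.mem_map.2 ⟨q, this, by omega⟩))

lemma getD_rev (u : List Bool) (j : ℕ) (h : j < u.length) :
    u.reverse.getD j false = u.getD (u.length - 1 - j) false := by
  rw [List.getD_eq_getElem u.reverse false (by simpa using h),
    List.getD_eq_getElem u false (by omega)]
  exact List.getElem_reverse _

lemma wz (u s t w : List Bool) (hst : s ++ (u ++ u.reverse ++ u) ++ t = w) :
    (∀ i, i < u.length → w.getD (s.length + i) false = u.getD i false) ∧
    (∀ i, u.length ≤ i → i < 2*u.length →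
      w.getD (s.length + i) false = u.getD (2*u.length - 1 - i) false) ∧
    (∀ i, 2*u.length ≤ i → i < 3*u.length →
      w.getD (s.length + i) false = u.getD (i - 2*u.length) false) := by
  subst hst
  have key : ∀ i, i < 3*u.length →
      (s ++ (u ++ u.reverse ++ u) ++ t).getD (s.length + i) false
        = (u ++ u.reverse ++ u).getD i false := by
    intro i hi
    rw [List.append_assoc]
    rw [List.getD_append_right s _ false _ (by omega)]
    rw [show s.length + i - s.length = i from by omega]
    rw [List.getD_append _ t false i (by simp; omega)]
  refine ⟨?_, ?_, ?_⟩
  · intro i hi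
    rw [key i (by omega)]
    rw [List.getD_append _ u false i (by simp; omega)]
    rw [List.getD_append u _ false i hi]
  · intro i h1 h2
    rw [key i (by omega)]
    rw [List.getD_append _ u false i (by simp; omega)]
    rw [List.getD_append_right u _ false i (by omega)]
    rw [getD_rev u (i - u.length) (by omega)]
    congr 1
    omega
  · intro i h1 h2
    rw [key i (by omega)]
    rw [List.getD_append_right _ u false i (by simp; omega)]
    congr 1
    simp
    omega


/-- If a word starting with `0`, avoiding `000` and `111`, contains an instance of
`x xᴿ x`, then its associated sequence has a valley, i.e. is not in `X`. -/
theorem stmt4 (w : List Bool) (h0 : w.head? = some false) (hc : AvoidsCubes w)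
    (hnot : ¬ AvoidsP w) (As : List (List Bool)) (bs : List Bool)
    (hf : IsFact As bs w) :
    (∃ j : ℕ, 1 ≤ j ∧ j + 1 < (seqOf As).length ∧
      (seqOf As).getD (j - 1) 0 ≥ (seqOf As).getD j 0 ∧
      (seqOf As).getD j 0 ≤ (seqOf As).getD (j + 1) 0) ∧ ¬ InX (seqOf As) := by
  obtain ⟨hlen, halt, hw⟩ := hf
  have hwne : w ≠ [] := by intro h; rw [h] at h0; simp at h0
  have hiff : ∀ p : ℕ, p ∈ dpos As ↔
      (p + 1 < w.length ∧ w.getD p false = w.getD (p+1) false) := by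
    intro p
    rw [hw]
    exact dbl_iff As bs hlen halt (by rw [← hw]; exact hc) p
  have hseq : seqOf As = gaps 0 (dpos As) w.length := by
    rw [hw]
    exact seqOf_eq_gaps As bs hlen (by rw [← hw]; exact hwne)
  rw [AvoidsP, not_not] at hnot
  obtain ⟨u, hune, s, t, hst⟩ := hnot
  have hm1 : 1 ≤ u.length := List.length_pos_iff.2 hune
  by_cases hm2' : u.length < 2
  · exfalso
    obtain ⟨c, rfl⟩ : ∃ c, u = [c] := List.length_eq_one_iff.1 (by omega)
    have h3 : [c, c, c] <:+: w := ⟨s, t, by simpa using hst⟩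
    cases c
    · exact hc.1 h3
    · exact hc.2 h3
  push_neg at hm2'
  obtain ⟨wz1, wz2, wz3⟩ := wz u s t w hst
  have hwl : w.length = s.length + (u.length + u.length + u.length) + t.length := by
    rw [← hst]; simp; omega
  have hmem : ∀ p, p + 1 < w.length → w.getD p false = w.getD (p+1) false →
      p ∈ dpos As := fun p h1 h2 => (hiff p).2 ⟨h1, h2⟩
  have hval : ∀ p ∈ dpos As, w.getD p false = w.getD (p+1) false :=
    fun p hp => ((hiff p).1 hp).2
  -- the two junction doubles
  have hq1 : (s.length + (u.length - 1)) ∈ dpos As := by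
    apply hmem _ (by omega)
    rw [wz1 (u.length - 1) (by omega),
      show s.length + (u.length - 1) + 1 = s.length + u.length from by omega,
      wz2 u.length (by omega) (by omega)]
    congr 1
    omega
  have hq2 : (s.length + (2*u.length - 1)) ∈ dpos As := by
    apply hmem _ (by omega)
    rw [wz2 (2*u.length - 1) (by omega) (by omega),
      show s.length + (2*u.length - 1) + 1 = s.length + 2*u.length from by omega,
      wz3 (2*u.length) (by omega) (by omega)]
    congr 1
    omega
  -- generic valley producer
  have main : ∀ (q1 n0 p0 q2 : ℕ), q1 ∈ dpos As → n0 ∈ dpos As → p0 ∈ dpos As →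
      q2 ∈ dpos As → q1 < n0 → p0 < q2 → q1 ≤ p0 → n0 ≤ q2 →
      (∀ p ∈ dpos As, q1 < p → n0 ≤ p) →
      (∀ p ∈ dpos As, p < q1 → p + (n0 - q1) ≤ q1) →
      (n0 - q1) ≤ q1 + 1 →
      (∀ p ∈ dpos As, p < q2 → p ≤ p0) →
      (∀ p ∈ dpos As, q2 < p → q2 + (q2 - p0) ≤ p) →
      q2 + (q2 - p0) + 1 ≤ w.length →
      ¬ NoValley (seqOf As) := by
    intro q1 n0 p0 q2 m1 m2 m3 m4 o1 o2 o3 o4 c1 c2 c3 c4 c5 c6 hnv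
    rw [hseq] at hnv
    obtain ⟨a, b, ha, hab, hblen, hga, hgb⟩ :=
      lemAB (dpos As) 0 w.length q1 n0 p0 q2 (dpos_chain As) m1 m2 m3 m4 o1 o2 o3 o4
        c1 c2 (by omega) c4 c5 c6
    have hd := desc _ hnv a ha hga b hab hblen
    omega
  have hNV : ¬ NoValley (seqOf As) := by
    by_cases hex : ∃ i, (u.getD i false = u.getD (i+1) false ∧ i ≤ u.length - 2)
    · -- u contains a double
      have hprx : ∃ pr, (u.getD pr false = u.getD (pr+1) false) ∧ pr ≤ u.length - 2 ∧
          ∀ k, pr < k → k ≤ u.length - 2 → ¬ (u.getD k false = u.getD (k+1) false) := by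
        obtain ⟨i0, hi0e, hi0le⟩ := hex
        exact ⟨Nat.findGreatest (fun i => u.getD i false = u.getD (i+1) false) (u.length - 2),
          Nat.findGreatest_spec (P := fun i => u.getD i false = u.getD (i+1) false) hi0le hi0e,
          Nat.findGreatest_le _,
          fun k h1 h2 => Nat.findGreatest_is_greatest (P := fun i => u.getD i false = u.getD (i+1) false) h1 h2⟩
      obtain ⟨pr, hprE, hprle, hprmax⟩ := hprx
      have hp1x : ∃ p1, (u.getD p1 false = u.getD (p1+1) false) ∧ p1 ≤ u.length - 2 ∧
          ∀ k, k < p1 → k ≤ u.length - 2 → ¬ (u.getD k false = u.getD (k+1) false) :=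
        ⟨Nat.find hex, (Nat.find_spec hex).1, (Nat.find_spec hex).2,
          fun k h1 h2 he => Nat.find_min hex h1 ⟨he, h2⟩⟩
      obtain ⟨p1, hp1E, hp1le, hp1min⟩ := hp1x
      have hp1pr : p1 ≤ pr := by
        by_contra h
        exact hprmax p1 (by omega) hp1le hp1E
      have hpr3 : pr + 3 ≤ u.length := by
        by_contra h
        apply no3 hc (s.length + (u.length - 2)) (by omega)
        constructor
        · rw [wz1 (u.length - 2) (by omega),
            show s.length + (u.length - 2) + 1 = s.length + (u.length - 1) from by omega,
            wz1 (u.length - 1) (by omega)]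
          have h2 := hprE
          rw [show pr = u.length - 2 from by omega] at h2
          rw [show u.length - 1 = u.length - 2 + 1 from by omega]
          exact h2
        · rw [show s.length + (u.length - 2) + 1 = s.length + (u.length - 1) from by omega,
            wz1 (u.length - 1) (by omega),
            show s.length + (u.length - 2) + 2 = s.length + u.length from by omega,
            wz2 u.length (by omega) (by omega)]
          congr 1
          omega
      have hp11 : 1 ≤ p1 := by
        by_contra h
        apply no3 hc (s.length + (2*u.length - 1)) (by omega)
        constructor
        · rw [wz2 (2*u.length - 1) (by omega) (by omega),
            show s.length + (2*u.length - 1) + 1 = s.length + 2*u.length from by omega,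
            wz3 (2*u.length) (by omega) (by omega)]
          congr 1
          omega
        · rw [show s.length + (2*u.length - 1) + 1 = s.length + 2*u.length from by omega,
            wz3 (2*u.length) (by omega) (by omega),
            show s.length + (2*u.length - 1) + 2 = s.length + (2*u.length + 1) from by omega,
            wz3 (2*u.length + 1) (by omega) (by omega)]
          have h2 := hp1E
          rw [show p1 = 0 from by omega] at h2
          rw [show 2*u.length - 2*u.length = 0 from by omega,
            show 2*u.length + 1 - 2*u.length = 0 + 1 from by omega]
          exact h2
      have hn0 : (s.length + (2*u.length - 2 - pr)) ∈ dpos As := by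
        apply hmem _ (by omega)
        rw [wz2 (2*u.length - 2 - pr) (by omega) (by omega),
          show s.length + (2*u.length - 2 - pr) + 1 = s.length + (2*u.length - 1 - pr)
            from by omega,
          wz2 (2*u.length - 1 - pr) (by omega) (by omega)]
        rw [show 2*u.length - 1 - (2*u.length - 2 - pr) = pr + 1 from by omega,
          show 2*u.length - 1 - (2*u.length - 1 - pr) = pr from by omega]
        exact hprE.symm
      have hp0 : (s.length + (2*u.length - 2 - p1)) ∈ dpos As := by
        apply hmem _ (by omega)
        rw [wz2 (2*u.length - 2 - p1) (by omega) (by omega),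
          show s.length + (2*u.length - 2 - p1) + 1 = s.length + (2*u.length - 1 - p1)
            from by omega,
          wz2 (2*u.length - 1 - p1) (by omega) (by omega)]
        rw [show 2*u.length - 1 - (2*u.length - 2 - p1) = p1 + 1 from by omega,
          show 2*u.length - 1 - (2*u.length - 1 - p1) = p1 from by omega]
        exact hp1E.symm
      apply main (s.length + (u.length - 1)) (s.length + (2*u.length - 2 - pr))
        (s.length + (2*u.length - 2 - p1)) (s.length + (2*u.length - 1))
        hq1 hn0 hp0 hq2 (by omega) (by omega) (by omega) (by omega)
      · -- HA1 : no doubles between q1 and n0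
        intro p hp hlt
        by_contra hcon
        push_neg at hcon
        have he := hval p hp
        obtain ⟨i, rfl⟩ : ∃ i, p = s.length + i := ⟨p - s.length, by omega⟩
        rw [wz2 i (by omega) (by omega),
          show s.length + i + 1 = s.length + (i+1) from by omega,
          wz2 (i+1) (by omega) (by omega)] at he
        refine hprmax (2*u.length - 2 - i) (by omega) (by omega) ?_
        rw [show 2*u.length - 2 - i + 1 = 2*u.length - 1 - i from by omega]
        rw [show 2*u.length - 1 - (i+1) = 2*u.length - 2 - i from by omega] at he
        exact he.symm
      · -- HA2 : doubles left of q1 are at distance ≥ gap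
        intro p hp hlt
        by_contra hcon
        push_neg at hcon
        have he := hval p hp
        obtain ⟨i, rfl⟩ : ∃ i, p = s.length + i := ⟨p - s.length, by omega⟩
        rw [wz1 i (by omega),
          show s.length + i + 1 = s.length + (i+1) from by omega,
          wz1 (i+1) (by omega)] at he
        exact hprmax i (by omega) (by omega) he
      · omega
      · -- HB1 : max double below q2 is p0
        intro p hp hlt
        by_contra hcon
        push_neg at hcon
        have he := hval p hp
        obtain ⟨i, rfl⟩ : ∃ i, p = s.length + i := ⟨p - s.length, by omega⟩
        rw [wz2 i (by omega) (by omega),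
          show s.length + i + 1 = s.length + (i+1) from by omega,
          wz2 (i+1) (by omega) (by omega)] at he
        refine hp1min (2*u.length - 2 - i) (by omega) (by omega) ?_
        rw [show 2*u.length - 2 - i + 1 = 2*u.length - 1 - i from by omega]
        rw [show 2*u.length - 1 - (i+1) = 2*u.length - 2 - i from by omega] at he
        exact he.symm
      · -- HB2 : doubles right of q2 are far
        intro p hp hlt
        by_contra hcon
        push_neg at hcon
        have he := hval p hp
        obtain ⟨i, rfl⟩ : ∃ i, p = s.length + i := ⟨p - s.length, by omega⟩
        rw [wz3 i (by omega) (by omega),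
          show s.length + i + 1 = s.length + (i+1) from by omega,
          wz3 (i+1) (by omega) (by omega)] at he
        refine hp1min (i - 2*u.length) (by omega) (by omega) ?_
        rw [show i - 2*u.length + 1 = i + 1 - 2*u.length from by omega]
        exact he
      · omega
    · push_neg at hex
      have hS : ∀ i, i ≤ u.length - 2 → u.getD i false ≠ u.getD (i+1) false :=
        fun i hi he => absurd (hex i he) (by omega)
      apply main (s.length + (u.length - 1)) (s.length + (2*u.length - 1))
        (s.length + (u.length - 1)) (s.length + (2*u.length - 1))
        hq1 hq2 hq1 hq2 (by omega) (by omega) (by omega) (by omega)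
      · -- no doubles in the middle
        intro p hp hlt
        by_contra hcon
        push_neg at hcon
        have he := hval p hp
        obtain ⟨i, rfl⟩ : ∃ i, p = s.length + i := ⟨p - s.length, by omega⟩
        rw [wz2 i (by omega) (by omega),
          show s.length + i + 1 = s.length + (i+1) from by omega,
          wz2 (i+1) (by omega) (by omega)] at he
        refine hS (2*u.length - 2 - i) (by omega) ?_
        rw [show 2*u.length - 2 - i + 1 = 2*u.length - 1 - i from by omega]
        rw [show 2*u.length - 1 - (i+1) = 2*u.length - 2 - i from by omega] at he
        exact he.symm
      · -- no doubles in the first copy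
        intro p hp hlt
        by_contra hcon
        push_neg at hcon
        have he := hval p hp
        obtain ⟨i, rfl⟩ : ∃ i, p = s.length + i := ⟨p - s.length, by omega⟩
        rw [wz1 i (by omega),
          show s.length + i + 1 = s.length + (i+1) from by omega,
          wz1 (i+1) (by omega)] at he
        exact hS i (by omega) he
      · omega
      · -- max below q2 is q1
        intro p hp hlt
        by_contra hcon
        push_neg at hcon
        have he := hval p hp
        obtain ⟨i, rfl⟩ : ∃ i, p = s.length + i := ⟨p - s.length, by omega⟩
        rw [wz2 i (by omega) (by omega),
          show s.length + i + 1 = s.length + (i+1) from by omega,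
          wz2 (i+1) (by omega) (by omega)] at he
        refine hS (2*u.length - 2 - i) (by omega) ?_
        rw [show 2*u.length - 2 - i + 1 = 2*u.length - 1 - i from by omega]
        rw [show 2*u.length - 1 - (i+1) = 2*u.length - 2 - i from by omega] at he
        exact he.symm
      · -- no doubles in third copy
        intro p hp hlt
        by_contra hcon
        push_neg at hcon
        have he := hval p hp
        obtain ⟨i, rfl⟩ : ∃ i, p = s.length + i := ⟨p - s.length, by omega⟩
        rw [wz3 i (by omega) (by omega),
          show s.length + i + 1 = s.length + (i+1) from by omega,
          wz3 (i+1) (by omega) (by omega)] at he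
        refine hS (i - 2*u.length) (by omega) ?_
        rw [show i - 2*u.length + 1 = i + 1 - 2*u.length from by omega]
        exact he
      · omega
  refine ⟨?_, fun hIn => hNV hIn.2⟩
  by_contra hno
  push_neg at hno
  apply hNV
  intro j h1 h2 hcd
  have := hno j h1 h2 hcd.1
  omega
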